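/- Let U be a Hilbert space, L : U → R^K linear bounded with γ := sup_{u≠0} ‖Lu‖_{Σ_L^{-1}}/‖u‖_U, and let u, u_R : R^M → U be linear maps such that ‖u(m) − u_R(m)‖_U ≤ ε ‖u(m)‖_U for all m, with 0 ≤ ε < 1. Define β := inf{‖Lu(m)‖_{Σ_L^{-1}}/‖u(m)‖_U : u(m) ≠ 0} and β_R := inf{‖Lu_R(m)‖_{Σ_L^{-1}}/‖u_R(m)‖_U : u_R(m) ≠ 0}. Then β ≥ (1−ε) β_R − γ ε. -/

import Mathlib

open Matrix

/-- The norm `‖x‖_A = √(xᵀ A x)` induced by an s.p.d. matrix `A`. -/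
noncomputable def wNorm {n : ℕ} (A : Matrix (Fin n) (Fin n) ℝ)
    (x : EuclideanSpace ℝ (Fin n)) : ℝ :=
  Real.sqrt (x ⬝ᵥ A.mulVec x)

open scoped MatrixOrder

lemma wNorm_eq_norm {n : ℕ} {A : Matrix (Fin n) (Fin n) ℝ} (hA : A.PosDef)
    (x : EuclideanSpace ℝ (Fin n)) :
    wNorm A x = ‖Matrix.toEuclideanLin (CFC.sqrt A) x‖ := by
  have hS := (CFC.sqrt_nonneg A).posSemidef
  have hmul := CFC.sqrt_mul_sqrt_self A hA.posSemidef.nonneg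
  set S := CFC.sqrt A with hSdef
  have hsym : Sᵀ = S := by
    have := hS.1
    simpa [Matrix.IsHermitian, Matrix.conjTranspose_eq_transpose_of_trivial] using this
  have h2 : x ᵥ* S = S *ᵥ x := by
    calc x ᵥ* S = Sᵀ *ᵥ x := (Matrix.mulVec_transpose S x).symm
    _ = S *ᵥ x := by rw [hsym]
  have key : x ⬝ᵥ A.mulVec x = (S.mulVec x) ⬝ᵥ (S.mulVec x) := by
    rw [← hmul, ← Matrix.mulVec_mulVec, Matrix.dotProduct_mulVec, h2]
  rw [wNorm, key, EuclideanSpace.norm_eq]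
  congr 1
  rw [Matrix.toEuclideanLin_apply]
  simp only [Real.norm_eq_abs, sq_abs,
    dotProduct, pow_two, abs_mul_abs_self]

/-- If the reduced-basis surrogate `uR` satisfies `‖u m − uR m‖ ≤ ε ‖u m‖` with
`0 ≤ ε < 1`, then the full observability coefficient `β` and the surrogate
observability coefficient `β_R` satisfy `β ≥ (1 − ε) β_R − γ ε`, where `γ` is the
noise-weighted operator norm of the observation operator `L`. -/
theorem observability_surrogate_lower_bound
    {M K : ℕ} {U : Type*} [NormedAddCommGroup U] [InnerProductSpace ℝ U]
    (L : U →L[ℝ] EuclideanSpace ℝ (Fin K))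
    (SL : Matrix (Fin K) (Fin K) ℝ) (hSL : SL.PosDef)
    (u uR : EuclideanSpace ℝ (Fin M) →ₗ[ℝ] U)
    (ε : ℝ) (hε0 : 0 ≤ ε) (hε1 : ε < 1)
    (happrox : ∀ m, ‖u m - uR m‖ ≤ ε * ‖u m‖)
    (γ : ℝ)
    (hγ : γ = sSup {r : ℝ | ∃ v : U, v ≠ 0 ∧ r = wNorm SL⁻¹ (L v) / ‖v‖})
    (β : ℝ)
    (hβ : β = sInf {r : ℝ | ∃ m : EuclideanSpace ℝ (Fin M),
      u m ≠ 0 ∧ r = wNorm SL⁻¹ (L (u m)) / ‖u m‖})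
    (βR : ℝ)
    (hβR : βR = sInf {r : ℝ | ∃ m : EuclideanSpace ℝ (Fin M),
      uR m ≠ 0 ∧ r = wNorm SL⁻¹ (L (uR m)) / ‖uR m‖}) :
    β ≥ (1 - ε) * βR - γ * ε := by
  have hA : (SL⁻¹).PosDef := hSL.inv
  set T : EuclideanSpace ℝ (Fin K) →L[ℝ] EuclideanSpace ℝ (Fin K) :=
    LinearMap.toContinuousLinearMap (Matrix.toEuclideanLin (CFC.sqrt SL⁻¹)) with hT
  set f : U →L[ℝ] EuclideanSpace ℝ (Fin K) := T.comp L with hf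
  have hw : ∀ v : U, wNorm SL⁻¹ (L v) = ‖f v‖ := fun v => by
    rw [wNorm_eq_norm hA]; rfl
  -- γ is nonnegative and dominates the weighted norm of L
  have hbdd : ∀ r ∈ {r : ℝ | ∃ v : U, v ≠ 0 ∧ r = wNorm SL⁻¹ (L v) / ‖v‖}, r ≤ ‖f‖ := by
    rintro r ⟨v, hv, rfl⟩
    rw [hw]
    rw [div_le_iff₀ (norm_pos_iff.mpr hv)]
    exact f.le_opNorm v
  have hγ0 : 0 ≤ γ := by
    by_cases hS : {r : ℝ | ∃ v : U, v ≠ 0 ∧ r = wNorm SL⁻¹ (L v) / ‖v‖}.Nonempty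
    · obtain ⟨r, v, hv, hr⟩ := hS
      have hr0 : 0 ≤ r := by
        rw [hr, hw]
        positivity
      calc (0:ℝ) ≤ r := hr0
        _ ≤ γ := by
          rw [hγ]
          exact le_csSup ⟨‖f‖, hbdd⟩ ⟨v, hv, hr⟩
    · rw [hγ, Set.not_nonempty_iff_eq_empty.mp hS, Real.sSup_empty]
  have hγL : ∀ v : U, ‖f v‖ ≤ γ * ‖v‖ := by
    intro v
    by_cases hv : v = 0
    · simp [hv]
    · have h1 : wNorm SL⁻¹ (L v) / ‖v‖ ≤ γ := by
        rw [hγ]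
        exact le_csSup ⟨‖f‖, hbdd⟩ ⟨v, hv, rfl⟩
      rw [hw] at h1
      calc ‖f v‖ = ‖f v‖ / ‖v‖ * ‖v‖ :=
            (div_mul_cancel₀ _ (ne_of_gt (norm_pos_iff.mpr hv))).symm
        _ ≤ γ * ‖v‖ := by
            apply mul_le_mul_of_nonneg_right h1 (norm_nonneg v)
  -- u m = 0 ↔ uR m = 0
  have hzero : ∀ m, u m = 0 ↔ uR m = 0 := by
    intro m
    constructor
    · intro h
      have := happrox m
      rw [h] at this
      simp at this
      have : ‖(0:U) - uR m‖ ≤ 0 := by simpa [h] using happrox m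
      simpa [norm_le_zero_iff] using this
    · intro h
      have h2 := happrox m
      rw [h, sub_zero] at h2
      have h3 : ‖u m‖ ≤ 0 := by nlinarith [norm_nonneg (u m)]
      exact norm_le_zero_iff.mp h3
  by_cases hne : ∃ m, u m ≠ 0
  · obtain ⟨m0, hm0⟩ := hne
    have hRm0 : uR m0 ≠ 0 := fun h => hm0 ((hzero m0).mpr h)
    have hβR0 : 0 ≤ βR := by
      rw [hβR]
      apply Real.sInf_nonneg
      rintro r ⟨m, hm, rfl⟩
      rw [hw]
      positivity
    rw [hβ, ge_iff_le]
    apply le_csInf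
    · exact ⟨wNorm SL⁻¹ (L (u m0)) / ‖u m0‖, m0, hm0, rfl⟩
    rintro r ⟨m, hm, rfl⟩
    have hRm : uR m ≠ 0 := fun h => hm ((hzero m).mpr h)
    have hun : (0:ℝ) < ‖u m‖ := norm_pos_iff.mpr hm
    have hRn : (0:ℝ) < ‖uR m‖ := norm_pos_iff.mpr hRm
    have h1 : βR ≤ wNorm SL⁻¹ (L (uR m)) / ‖uR m‖ := by
      rw [hβR]
      apply csInf_le
      · refine ⟨0, ?_⟩
        rintro r ⟨m', hm', rfl⟩
        rw [hw]
        positivity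
      · exact ⟨m, hRm, rfl⟩
    rw [hw] at h1
    have h2 : βR * ‖uR m‖ ≤ ‖f (uR m)‖ := by
      rw [← le_div_iff₀ hRn]; exact h1
    have h3 : (1 - ε) * ‖u m‖ ≤ ‖uR m‖ := by
      have := norm_sub_norm_le (u m) (uR m)
      have h4 := happrox m
      nlinarith
    have h5 : ‖f (u m - uR m)‖ ≤ γ * (ε * ‖u m‖) := by
      calc ‖f (u m - uR m)‖ ≤ γ * ‖u m - uR m‖ := hγL _
        _ ≤ γ * (ε * ‖u m‖) := mul_le_mul_of_nonneg_left (happrox m) hγ0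
    have h6 : ‖f (uR m)‖ - ‖f (u m)‖ ≤ ‖f (u m - uR m)‖ := by
      have h7 := norm_sub_norm_le (f (uR m)) (f (u m))
      have h8 : f (uR m) - f (u m) = -(f (u m - uR m)) := by
        rw [map_sub]; abel
      rw [h8, norm_neg] at h7
      exact h7
    rw [hw, le_div_iff₀ hun]
    have hint := mul_le_mul_of_nonneg_left h3 hβR0
    set a := ‖u m‖
    set b := ‖uR m‖
    set c := ‖f (u m)‖
    set d := ‖f (uR m)‖
    set ee := ‖f (u m - uR m)‖
    linarith [hint, h2, h5, h6]
  · push_neg at hne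
    have hβe : β = 0 := by
      rw [hβ]
      convert Real.sInf_empty
      ext r
      simp only [Set.mem_setOf_eq, Set.mem_empty_iff_false, iff_false, not_exists]
      intro m ⟨hm, _⟩
      exact hm (hne m)
    have hβRe : βR = 0 := by
      rw [hβR]
      convert Real.sInf_empty
      ext r
      simp only [Set.mem_setOf_eq, Set.mem_empty_iff_false, iff_false, not_exists]
      intro m ⟨hm, _⟩
      exact hm ((hzero m).mp (hne m))
    rw [hβe, hβRe]
    have := mul_nonneg hγ0 hε0
    linarith
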